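/- Let N and M be modules over R^s. Under the isomorphism N ⊗_{R^s} R ⊗_{R^s} M ≅ (N ⊗_{R^s} M) ⊕ (N ⊗_{R^s} M) induced by the R^s-basis {1, ρ} of the middle factor (n ⊗ r ⊗ m ↦ (∂_s(−r·(s·ρ))·n ⊗ m, ∂_s(r)·n ⊗ m)), the endomorphism n ⊗ r ⊗ m ↦ n ⊗ ρr ⊗ m corresponds to the matrix of R^s-linear maps [[0, μ(−ρ·(s·ρ))], [id, μ(ρ + s·ρ)]], where for c ∈ R^s the map μ(c) : N ⊗_{R^s} M → N ⊗_{R^s} M is n ⊗ m ↦ c·n ⊗ m. -/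

import Mathlib

open MvPolynomial TensorProduct

set_option synthInstance.maxHeartbeats 1000000
set_option maxHeartbeats 1000000

/-- The polynomial on `V = Fin n → ℝ` representing the linear form with coefficient
vector `g`, i.e. `v ↦ ∑ i, g i * v i`. -/
noncomputable def linForm (n : ℕ) (g : Fin n → ℝ) : MvPolynomial (Fin n) ℝ :=
  ∑ i, MvPolynomial.C (g i) * MvPolynomial.X i

/-- The algebra automorphism of `R = ℝ[X₁,…,Xₙ]` (polynomial functions on `V = Fin n → ℝ`)
given by `(s·f)(v) = f (s v)` for the reflection `s(v) = v - ⟨α_s, v⟩ α_s^∨`, where the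
linear form `α_s` has coefficient vector `a` and the vector `α_s^∨` has coordinates `c`. -/
noncomputable def reflAct (n : ℕ) (a c : Fin n → ℝ) :
    MvPolynomial (Fin n) ℝ →ₐ[ℝ] MvPolynomial (Fin n) ℝ :=
  MvPolynomial.aeval fun j => MvPolynomial.X j - MvPolynomial.C (c j) * linForm n a

/-- The subalgebra `Rˢ ⊆ R` of `s`-invariant polynomials. -/
noncomputable def invariants (n : ℕ) (a c : Fin n → ℝ) :
    Subalgebra ℝ (MvPolynomial (Fin n) ℝ) :=
  AlgHom.equalizer (reflAct n a c) (AlgHom.id ℝ (MvPolynomial (Fin n) ℝ))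

section Aux

variable (n : ℕ) (a c rv : Fin n → ℝ)

lemma reflAct_X (j : Fin n) :
    reflAct n a c (X j) = X j - C (c j) * linForm n a := by
  simp [reflAct]

lemma reflAct_linForm (g : Fin n → ℝ) :
    reflAct n a c (linForm n g) = linForm n g - C (∑ i, g i * c i) * linForm n a := by
  simp only [linForm, reflAct, map_sum, map_mul, aeval_C, aeval_X, algebraMap_eq]
  rw [eq_sub_iff_add_eq, Finset.sum_mul, ← Finset.sum_add_distrib]
  apply Finset.sum_congr rfl
  intro i _
  ring

lemma linForm_ne_zero (hac : ∑ i, a i * c i = 2) : linForm n a ≠ 0 := by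
  intro h
  have : eval c (linForm n a) = 0 := by rw [h]; simp
  rw [linForm] at this
  simp only [map_sum, map_mul, eval_C, eval_X] at this
  rw [hac] at this
  norm_num at this

lemma reflAct_alpha (hac : ∑ i, a i * c i = 2) :
    reflAct n a c (linForm n a) = -(linForm n a) := by
  rw [reflAct_linForm, hac]
  rw [map_ofNat]; ring

lemma reflAct_rho (hrc : ∑ i, rv i * c i = 1) :
    reflAct n a c (linForm n rv) = linForm n rv - linForm n a := by
  rw [reflAct_linForm, hrc]
  simp

lemma reflAct_reflAct (hac : ∑ i, a i * c i = 2) (f : MvPolynomial (Fin n) ℝ) :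
    reflAct n a c (reflAct n a c f) = f := by
  have h : (reflAct n a c).comp (reflAct n a c) = AlgHom.id ℝ (MvPolynomial (Fin n) ℝ) := by
    apply MvPolynomial.algHom_ext
    intro j
    simp only [AlgHom.comp_apply, AlgHom.id_apply, reflAct_X, map_sub, map_mul,
      reflAct_alpha n a c hac]
    have hC : reflAct n a c (C (c j)) = C (c j) := by simp [reflAct]
    rw [hC]
    ring
  calc reflAct n a c (reflAct n a c f) = ((reflAct n a c).comp (reflAct n a c)) f := rfl
    _ = f := by rw [h]; rfl

lemma dvd_sub_reflAct (f : MvPolynomial (Fin n) ℝ) :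
    linForm n a ∣ f - reflAct n a c f := by
  set I := Ideal.span {linForm n a} with hI
  rw [← Ideal.mem_span_singleton, ← hI]
  have hmem : linForm n a ∈ I := Ideal.subset_span rfl
  have h : (Ideal.Quotient.mkₐ ℝ I).comp (reflAct n a c) = Ideal.Quotient.mkₐ ℝ I := by
    apply MvPolynomial.algHom_ext
    intro j
    simp only [AlgHom.comp_apply, reflAct_X, map_sub, map_mul, Ideal.Quotient.mkₐ_eq_mk]
    have : Ideal.Quotient.mk I (linForm n a) = 0 := Ideal.Quotient.eq_zero_iff_mem.mpr hmem
    rw [this]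
    ring
  have h2 : Ideal.Quotient.mk I (reflAct n a c f) = Ideal.Quotient.mk I f := by
    have := congrArg (fun g => g f) h
    simpa using this
  have h3 := (Ideal.Quotient.eq (I := I)).mp h2
  simpa using I.neg_mem h3

lemma mem_invariants (f : MvPolynomial (Fin n) ℝ) :
    f ∈ invariants n a c ↔ reflAct n a c f = f := by
  rfl

lemma exists_decomp (hac : ∑ i, a i * c i = 2) (hrc : ∑ i, rv i * c i = 1)
    (f : MvPolynomial (Fin n) ℝ) :
    ∃ u v : invariants n a c,
      f = (u : MvPolynomial (Fin n) ℝ) + (v : MvPolynomial (Fin n) ℝ) * linForm n rv := by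
  obtain ⟨v, hv⟩ := dvd_sub_reflAct n a c f
  have hαne := linForm_ne_zero n a c hac
  have hvinv : reflAct n a c v = v := by
    have h1 : reflAct n a c (f - reflAct n a c f) = reflAct n a c f - f := by
      rw [map_sub, reflAct_reflAct n a c hac]
    rw [hv, map_mul, reflAct_alpha n a c hac] at h1
    have h2 : reflAct n a c f - f = -(linForm n a * v) := by rw [← hv]; ring
    rw [h2] at h1
    have h3 : linForm n a * reflAct n a c v = linForm n a * v := by
      linear_combination -h1
    exact mul_left_cancel₀ hαne h3
  have hv' : v ∈ invariants n a c := hvinv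
  set ρ := linForm n rv
  have huinv : reflAct n a c (f - v * ρ) = f - v * ρ := by
    rw [map_sub, map_mul, hvinv, reflAct_rho n a c rv hrc]
    have : reflAct n a c f = f - linForm n a * v := by rw [← hv]; ring
    rw [this]; ring
  exact ⟨⟨f - v * ρ, huinv⟩, ⟨v, hvinv⟩, by ring⟩

end Aux

section Equiv

variable (n : ℕ) (a c rv : Fin n → ℝ)

noncomputable def phi : (invariants n a c × invariants n a c) →ₗ[invariants n a c]
    MvPolynomial (Fin n) ℝ where
  toFun p := (p.1 : MvPolynomial (Fin n) ℝ) + (p.2 : MvPolynomial (Fin n) ℝ) * linForm n rv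
  map_add' p q := by simp only [Prod.fst_add, Prod.snd_add]; push_cast; ring
  map_smul' s p := by
    simp only [Prod.smul_fst, Prod.smul_snd, RingHom.id_apply, smul_eq_mul]
    show ((s * p.1 : invariants n a c) : MvPolynomial (Fin n) ℝ) + (s * p.2 : invariants n a c) * linForm n rv
      = (s : MvPolynomial (Fin n) ℝ) * _
    push_cast; ring

lemma phi_bijective (hac : ∑ i, a i * c i = 2) (hrc : ∑ i, rv i * c i = 1) :
    Function.Bijective (phi n a c rv) := by
  constructor
  · rw [injective_iff_map_eq_zero]
    intro p hp
    have hαne := linForm_ne_zero n a c hac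
    have hp' : (p.1 : MvPolynomial (Fin n) ℝ) + p.2 * linForm n rv = 0 := hp
    have h1 : reflAct n a c ((p.1 : MvPolynomial (Fin n) ℝ) + p.2 * linForm n rv) = 0 := by
      rw [hp', map_zero]
    rw [map_add, map_mul, p.1.2, p.2.2, reflAct_rho n a c rv hrc] at h1
    simp only [AlgHom.id_apply] at h1
    have h2 : (p.2 : MvPolynomial (Fin n) ℝ) * linForm n a = 0 := by
      linear_combination hp' - h1
    have h3 : (p.2 : MvPolynomial (Fin n) ℝ) = 0 := by
      rcases mul_eq_zero.mp h2 with h | h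
      · exact h
      · exact absurd h hαne
    have h4 : (p.1 : MvPolynomial (Fin n) ℝ) = 0 := by
      rw [h3] at hp'; simpa using hp'
    have e1 : p.1 = 0 := Subtype.ext h4
    have e2 : p.2 = 0 := Subtype.ext h3
    rw [Prod.ext_iff]
    exact ⟨e1, e2⟩
  · intro f
    obtain ⟨u, v, huv⟩ := exists_decomp n a c rv hac hrc f
    exact ⟨(u, v), huv.symm⟩

noncomputable def Phi (hac : ∑ i, a i * c i = 2) (hrc : ∑ i, rv i * c i = 1) :
    (invariants n a c × invariants n a c) ≃ₗ[invariants n a c] MvPolynomial (Fin n) ℝ :=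
  LinearEquiv.ofBijective (phi n a c rv) (phi_bijective n a c rv hac hrc)

lemma Phi_apply (hac : ∑ i, a i * c i = 2) (hrc : ∑ i, rv i * c i = 1)
    (q : invariants n a c × invariants n a c) :
    Phi n a c rv hac hrc q
      = (q.1 : MvPolynomial (Fin n) ℝ) + (q.2 : MvPolynomial (Fin n) ℝ) * linForm n rv := rfl

end Equiv

section Tensor

variable (n : ℕ) (a c rv : Fin n → ℝ)
  (hac : ∑ i, a i * c i = 2) (hrc : ∑ i, rv i * c i = 1)
  (N : Type) [AddCommGroup N] [Module (invariants n a c) N]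
  (M : Type) [AddCommGroup M] [Module (invariants n a c) M]

noncomputable def bigEquiv :
    (N ⊗[invariants n a c] (MvPolynomial (Fin n) ℝ ⊗[invariants n a c] M))
      ≃ₗ[invariants n a c]
    ((N ⊗[invariants n a c] M) × (N ⊗[invariants n a c] M)) :=
  (TensorProduct.congr (LinearEquiv.refl (invariants n a c) N)
    ((TensorProduct.congr (Phi n a c rv hac hrc).symm
        (LinearEquiv.refl (invariants n a c) M)).trans
      ((TensorProduct.prodLeft (invariants n a c) (invariants n a c) (invariants n a c) (invariants n a c) M).trans
        ((TensorProduct.lid (invariants n a c) M).prodCongr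
          (TensorProduct.lid (invariants n a c) M))))).trans
  (TensorProduct.prodRight (invariants n a c) (invariants n a c) N M M)

lemma bigEquiv_apply (x : N) (r : MvPolynomial (Fin n) ℝ) (m : M) :
    bigEquiv n a c rv hac hrc N M (x ⊗ₜ (r ⊗ₜ m)) =
      ((((Phi n a c rv hac hrc).symm r).1 • x) ⊗ₜ m,
       (((Phi n a c rv hac hrc).symm r).2 • x) ⊗ₜ m) := by
  set p := (Phi n a c rv hac hrc).symm r with hp
  show (TensorProduct.prodRight (invariants n a c) (invariants n a c) N M M)
    (x ⊗ₜ (((TensorProduct.lid (invariants n a c) M).prodCongr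
      (TensorProduct.lid (invariants n a c) M))
      ((TensorProduct.prodLeft (invariants n a c) (invariants n a c) (invariants n a c)
        (invariants n a c) M) (p ⊗ₜ m)))) = _
  rw [← Prod.mk.eta (p := p)]
  simp only [TensorProduct.prodLeft_tmul, LinearEquiv.prodCongr_apply,
    TensorProduct.lid_tmul, TensorProduct.prodRight_tmul, TensorProduct.tmul_smul,
    TensorProduct.smul_tmul']

end Tensor

/-- For `Rˢ`-modules `N`, `M`, under the isomorphism
`N ⊗_{Rˢ} R ⊗_{Rˢ} M ≅ (N ⊗_{Rˢ} M) ⊕ (N ⊗_{Rˢ} M)` induced by the `Rˢ`-basis `{1, ρ}` of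
the middle factor, `n ⊗ r ⊗ m ↦ (∂ₛ(-r·(s·ρ))·n ⊗ m, ∂ₛ(r)·n ⊗ m)`, the endomorphism
`n ⊗ r ⊗ m ↦ n ⊗ ρr ⊗ m` corresponds to the matrix `[[0, μ(-ρ·(s·ρ))], [id, μ(ρ + s·ρ)]]`,
where `μ(c)` is the action of the invariant scalar `c` on the first factor.  The Demazure
values `∂ₛ(-r·(s·ρ)) = d₁` and `∂ₛ(r) = d₂` are characterized as invariants with
`αₛ·d₁ = (-r·(s·ρ)) - s·(-r·(s·ρ))` and `αₛ·d₂ = r - s·r`. -/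
theorem middle_multiplication_matrix (n : ℕ) (a c rv : Fin n → ℝ)
    (hac : ∑ i, a i * c i = 2) (hrc : ∑ i, rv i * c i = 1)
    (N : Type) [AddCommGroup N] [Module (invariants n a c) N]
    (M : Type) [AddCommGroup M] [Module (invariants n a c) M] :
    ∃ e : (N ⊗[invariants n a c] (MvPolynomial (Fin n) ℝ ⊗[invariants n a c] M))
          ≃ₗ[invariants n a c]
          ((N ⊗[invariants n a c] M) × (N ⊗[invariants n a c] M)),
      (∀ (x : N) (r : MvPolynomial (Fin n) ℝ) (m : M) (d₁ d₂ : invariants n a c),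
        linForm n a * (d₁ : MvPolynomial (Fin n) ℝ) =
          (-(r * reflAct n a c (linForm n rv))) -
            reflAct n a c (-(r * reflAct n a c (linForm n rv))) →
        linForm n a * (d₂ : MvPolynomial (Fin n) ℝ) = r - reflAct n a c r →
        e (x ⊗ₜ[invariants n a c] (r ⊗ₜ[invariants n a c] m)) =
          ((d₁ • x) ⊗ₜ[invariants n a c] m, (d₂ • x) ⊗ₜ[invariants n a c] m)) ∧
      (∀ (x : N) (r : MvPolynomial (Fin n) ℝ) (m : M) (c₁ c₂ : invariants n a c),
        (c₁ : MvPolynomial (Fin n) ℝ) =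
          -(linForm n rv * reflAct n a c (linForm n rv)) →
        (c₂ : MvPolynomial (Fin n) ℝ) =
          linForm n rv + reflAct n a c (linForm n rv) →
        e (x ⊗ₜ[invariants n a c] ((linForm n rv * r) ⊗ₜ[invariants n a c] m)) =
          (c₁ • (e (x ⊗ₜ[invariants n a c] (r ⊗ₜ[invariants n a c] m))).2,
            (e (x ⊗ₜ[invariants n a c] (r ⊗ₜ[invariants n a c] m))).1 +
              c₂ • (e (x ⊗ₜ[invariants n a c] (r ⊗ₜ[invariants n a c] m))).2)) := by
  have hαne := linForm_ne_zero n a c hac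
  refine ⟨bigEquiv n a c rv hac hrc N M, ?_, ?_⟩
  · intro x r m d₁ d₂ h1 h2
    rw [bigEquiv_apply]
    have hsymm : (Phi n a c rv hac hrc).symm r = (d₁, d₂) := by
      rw [LinearEquiv.symm_apply_eq, Phi_apply]
      have hss : reflAct n a c (reflAct n a c (linForm n rv)) = linForm n rv :=
        reflAct_reflAct n a c hac _
      have e1 : reflAct n a c (-(r * reflAct n a c (linForm n rv)))
          = -(reflAct n a c r * linForm n rv) := by
        rw [map_neg, map_mul, hss]
      rw [e1, reflAct_rho n a c rv hrc] at h1
      have key : linForm n a * r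
          = linForm n a * ((d₁ : MvPolynomial (Fin n) ℝ) + d₂ * linForm n rv) := by
        linear_combination -h1 - h2 * linForm n rv
      exact mul_left_cancel₀ hαne key
    rw [hsymm]
  · intro x r m c₁ c₂ hc₁ hc₂
    have hr : ((((Phi n a c rv hac hrc).symm r).1 : MvPolynomial (Fin n) ℝ)
        + (((Phi n a c rv hac hrc).symm r).2 : MvPolynomial (Fin n) ℝ) * linForm n rv) = r := by
      have := (Phi n a c rv hac hrc).apply_symm_apply r
      rw [Phi_apply] at this
      exact this
    set p := (Phi n a c rv hac hrc).symm r with hpdef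
    have hsymm2 : (Phi n a c rv hac hrc).symm (linForm n rv * r)
        = (c₁ * p.2, p.1 + c₂ * p.2) := by
      rw [LinearEquiv.symm_apply_eq, Phi_apply]
      push_cast
      rw [hc₁, hc₂]
      linear_combination (-(linForm n rv)) * hr
    rw [bigEquiv_apply, bigEquiv_apply, hsymm2, ← hpdef]
    simp only [TensorProduct.smul_tmul', smul_smul, add_smul, TensorProduct.add_tmul]
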